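/- Let Comp_k ∈ {Top_k, Rand_k} and let Q_s be an unbiased randomized quantizer with second-moment blowup β_{k,s} on k-sparse vectors. Then the scaled composed operator x ↦ Q_s(Comp_k(x))/(1+β_{k,s}) is a compression operator with coefficient γ = k/(d(1+β_{k,s})): for every x ∈ ℝ^d, E_{C,Q}‖x − Q_s(Comp_k(x))/(1+β_{k,s})‖₂² ≤ [1 − k/(d(1+β_{k,s}))]‖x‖₂². This holds for all β_{k,s} > 0 (no restriction β_{k,s} < 1 is needed). -/

import Mathlib

open MeasureTheory
open scoped RealInnerProductSpace

/-- Scaled composed operator: for any `β > 0`, the scaled operator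
`x ↦ Q(C(x)) / (1+β)` is a compression operator with coefficient `k/(d(1+β))`. -/
theorem scaled_composed_operator_compression {ΩC ΩQ : Type*} [MeasurableSpace ΩC]
    [MeasurableSpace ΩQ] (μC : Measure ΩC) (μQ : Measure ΩQ)
    [IsProbabilityMeasure μC] [IsProbabilityMeasure μQ]
    (d k : ℕ) (hd : 0 < d) (hk : 1 ≤ k) (hkd : k ≤ d)
    (β : ℝ) (hβ0 : 0 < β)
    (x : EuclideanSpace ℝ (Fin d))
    (C : ΩC → EuclideanSpace ℝ (Fin d))
    (Q : EuclideanSpace ℝ (Fin d) → ΩQ → EuclideanSpace ℝ (Fin d))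
    (hQint : ∀ y, Integrable (fun ωq => Q y ωq) μQ)
    (hQunbiased : ∀ y, ∫ ωq, Q y ωq ∂μQ = y)
    (hQmoment : ∀ ωc, ∫ ωq, ‖Q (C ωc) ωq‖ ^ 2 ∂μQ ≤ (1 + β) * ‖C ωc‖ ^ 2)
    (hCinner : ∀ ωc, ⟪x, C ωc⟫ = ‖C ωc‖ ^ 2)
    (hClower : (k : ℝ) / d * ‖x‖ ^ 2 ≤ ∫ ωc, ‖C ωc‖ ^ 2 ∂μC)
    (hCint : Integrable (fun ωc => ‖C ωc‖ ^ 2) μC)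
    (hint : Integrable (fun ωc => ∫ ωq, ‖x - (1 + β)⁻¹ • Q (C ωc) ωq‖ ^ 2 ∂μQ) μC) :
    ∫ ωc, ∫ ωq, ‖x - (1 + β)⁻¹ • Q (C ωc) ωq‖ ^ 2 ∂μQ ∂μC ≤
      (1 - (k : ℝ) / (d * (1 + β))) * ‖x‖ ^ 2 := by
  have hβ1 : (0:ℝ) < 1 + β := by linarith
  set a : ℝ := (1 + β)⁻¹ with ha
  have ha0 : 0 < a := inv_pos.mpr hβ1
  have haβ : a * (1 + β) = 1 := inv_mul_cancel₀ (by linarith)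
  have ha1 : a ≤ 1 := by nlinarith
  have hCle : ∀ ωc, ‖C ωc‖ ≤ ‖x‖ := by
    intro ωc
    by_cases h : C ωc = 0
    · simp [h]
    · have h1 : ‖C ωc‖ ^ 2 = ⟪x, C ωc⟫ := (hCinner ωc).symm
      have h2 := real_inner_le_norm x (C ωc)
      have h3 : 0 < ‖C ωc‖ := norm_pos_iff.mpr h
      nlinarith
  have key : ∀ ωc, ∫ ωq, ‖x - a • Q (C ωc) ωq‖ ^ 2 ∂μQ ≤ ‖x‖ ^ 2 - a * ‖C ωc‖ ^ 2 := by
    intro ωc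
    set g := fun ωq => Q (C ωc) ωq with hg_def
    have hexp : ∀ ωq, ‖x - a • g ωq‖ ^ 2
        = ‖x‖ ^ 2 - 2 * a * ⟪x, g ωq⟫ + a ^ 2 * ‖g ωq‖ ^ 2 := by
      intro ωq
      rw [norm_sub_sq_real, real_inner_smul_right, norm_smul]
      rw [Real.norm_eq_abs, abs_of_pos ha0]
      ring
    by_cases hf : Integrable (fun ωq => ‖x - a • g ωq‖ ^ 2) μQ
    · have hg : Integrable g μQ := hQint _
      have hinn : Integrable (fun ωq => ⟪x, g ωq⟫) μQ := hg.const_inner x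
      have hg2 : Integrable (fun ωq => ‖g ωq‖ ^ 2) μQ := by
        have h1 : Integrable (fun ωq =>
            (‖x - a • g ωq‖ ^ 2 - ‖x‖ ^ 2 + 2 * a * ⟪x, g ωq⟫) / a ^ 2) μQ :=
          ((hf.sub (integrable_const _)).add (hinn.const_mul (2 * a))).div_const _
        refine h1.congr (Filter.Eventually.of_forall fun ωq => ?_)
        simp only [hexp ωq]
        field_simp
        ring
      have hi1 : Integrable (fun ωq => ‖x‖ ^ 2 - 2 * a * ⟪x, g ωq⟫) μQ :=
        (integrable_const _).sub (hinn.const_mul _)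
      have hi2 : Integrable (fun ωq => a ^ 2 * ‖g ωq‖ ^ 2) μQ := hg2.const_mul _
      have hsplit : ∫ ωq, ‖x - a • g ωq‖ ^ 2 ∂μQ
          = ‖x‖ ^ 2 - 2 * a * ⟪x, ∫ ωq, g ωq ∂μQ⟫ + a ^ 2 * ∫ ωq, ‖g ωq‖ ^ 2 ∂μQ := by
        rw [show (fun ωq => ‖x - a • g ωq‖ ^ 2)
            = fun ωq => ‖x‖ ^ 2 - 2 * a * ⟪x, g ωq⟫ + a ^ 2 * ‖g ωq‖ ^ 2 from
          funext hexp]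
        rw [integral_add hi1 hi2, integral_sub (integrable_const _) (hinn.const_mul _),
          integral_const, integral_const_mul, integral_const_mul, integral_inner hg]
        simp
      have hint_eq : ∫ ωq, g ωq ∂μQ = C ωc := hQunbiased (C ωc)
      have hm : ∫ ωq, ‖g ωq‖ ^ 2 ∂μQ ≤ (1 + β) * ‖C ωc‖ ^ 2 := hQmoment ωc
      rw [hsplit, hint_eq, hCinner]
      have h4 : a ^ 2 * ∫ ωq, ‖g ωq‖ ^ 2 ∂μQ ≤ a ^ 2 * ((1 + β) * ‖C ωc‖ ^ 2) :=
        mul_le_mul_of_nonneg_left hm (sq_nonneg a)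
      have h5 : a ^ 2 * ((1 + β) * ‖C ωc‖ ^ 2) = a * ‖C ωc‖ ^ 2 := by
        rw [pow_two, mul_assoc, ← mul_assoc a (1 + β), haβ, one_mul]
      linarith
    · rw [integral_undef hf]
      have h1 := hCle ωc
      nlinarith [norm_nonneg (C ωc), norm_nonneg x]
  have hmono : ∫ ωc, ∫ ωq, ‖x - a • Q (C ωc) ωq‖ ^ 2 ∂μQ ∂μC
      ≤ ∫ ωc, (‖x‖ ^ 2 - a * ‖C ωc‖ ^ 2) ∂μC :=
    integral_mono hint ((integrable_const _).sub (hCint.const_mul a)) key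
  have heq : ∫ ωc, (‖x‖ ^ 2 - a * ‖C ωc‖ ^ 2) ∂μC
      = ‖x‖ ^ 2 - a * ∫ ωc, ‖C ωc‖ ^ 2 ∂μC := by
    rw [integral_sub (integrable_const _) (hCint.const_mul a), integral_const,
      integral_const_mul]
    simp
  have hd' : (0:ℝ) < d := by exact_mod_cast hd
  have hcoef : 1 - (k : ℝ) / (d * (1 + β)) = 1 - a * ((k : ℝ) / d) := by
    rw [ha]; field_simp
  have hfin : a * ((k : ℝ) / d * ‖x‖ ^ 2) ≤ a * ∫ ωc, ‖C ωc‖ ^ 2 ∂μC :=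
    mul_le_mul_of_nonneg_left hClower ha0.le
  calc ∫ ωc, ∫ ωq, ‖x - a • Q (C ωc) ωq‖ ^ 2 ∂μQ ∂μC
      ≤ ‖x‖ ^ 2 - a * ∫ ωc, ‖C ωc‖ ^ 2 ∂μC := heq ▸ hmono
    _ ≤ ‖x‖ ^ 2 - a * ((k : ℝ) / d * ‖x‖ ^ 2) := by linarith
    _ = (1 - (k : ℝ) / (d * (1 + β))) * ‖x‖ ^ 2 := by rw [hcoef]; ring
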